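/- Let X be a finite poset with a labeling δ: X → ℚ and γ a path, and consider the formal sums over linear extensions defining Yamamoto-type symbols I(X) := Σ_{Ȳ ∈ Tot(X)} I(Ȳ) in the shuffle algebra of words on ℚ between the endpoints γ(0), γ(1). Then for disjoint posets X and Y, I(X ⊔ Y) = I(X) ⧢-product I(Y): namely Σ_{Z̄ ∈ Tot(X⊔Y)} (word of Z̄) = (Σ_{X̄ ∈ Tot(X)} word of X̄) ⧢ (Σ_{Ȳ ∈ Tot(Y)} word of Ȳ). -/

import Mathlib

/-- The list of all shuffles of two words. -/
def shuffles {α : Type*} : List α → List α → List (List α)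
  | [], v => [v]
  | u, [] => [u]
  | a :: u, b :: v =>
      ((shuffles u (b :: v)).map (a :: ·)) ++ ((shuffles (a :: u) v).map (b :: ·))
  termination_by u v => u.length + v.length

/-- The shuffle product on the free ℚ-vector space on words over ℚ, given by
bilinear extension of `u ⧢ v = Σ_{w shuffle of u,v} w`. -/
noncomputable def shMul (f g : List ℚ →₀ ℚ) : List ℚ →₀ ℚ :=
  f.sum fun u cu => g.sum fun v cv =>
    cu • cv • ((shuffles u v).map fun w => Finsupp.single w (1 : ℚ)).sum

/-- An enumeration `e : Fin n ≃ Z` encodes a linear extension of `r` when the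
order of indices extends `r`. -/
def IsLinExtEnum {Z : Type*} [Fintype Z] (r : Z → Z → Prop)
    (e : Fin (Fintype.card Z) ≃ Z) : Prop :=
  ∀ i j : Fin (Fintype.card Z), r (e i) (e j) → i ≤ j

/-- `I(X) = Σ_{Ȳ ∈ Tot(X)} (word of Ȳ)`: the formal sum of the words (lists of
labels read in increasing order) of all linear extensions of `(Z, r)`. -/
noncomputable def wordSum {Z : Type*} [Fintype Z] (r : Z → Z → Prop)
    (δ : Z → ℚ) : List ℚ →₀ ℚ :=
  ∑ᶠ e ∈ {e : Fin (Fintype.card Z) ≃ Z | IsLinExtEnum r e},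
    Finsupp.single (List.ofFn fun i => δ (e i)) (1 : ℚ)

/-! ### Auxiliary lemmas about `shuffles` -/

theorem shuffles_nil_right {α : Type*} (u : List α) : shuffles u [] = [u] := by
  cases u <;> simp [shuffles]

theorem shuffles_map {α β : Type*} (f : α → β) : ∀ (u v : List α),
    (shuffles u v).map (List.map f) = shuffles (u.map f) (v.map f)
  | [], v => by simp [shuffles]
  | a :: u, [] => by simp [shuffles]
  | a :: u, b :: v => by
    have h1 := shuffles_map f u (b :: v)
    have h2 := shuffles_map f (a :: u) v
    simp only [List.map_cons] at h1 h2
    rw [shuffles, List.map_cons, List.map_cons, shuffles, ← h1, ← h2]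
    simp [Function.comp_def]
  termination_by u v => u.length + v.length

theorem perm_of_mem_shuffles {α : Type*} : ∀ (u v w : List α),
    w ∈ shuffles u v → w.Perm (u ++ v)
  | [], v, w => by intro hw; simp [shuffles] at hw; subst hw; simp
  | a :: u, [], w => by intro hw; simp [shuffles] at hw; subst hw; simp
  | a :: u, b :: v, w => by
    rw [shuffles]
    simp only [List.mem_append, List.mem_map]
    rintro (⟨s, hs, rfl⟩ | ⟨s, hs, rfl⟩)
    · exact (perm_of_mem_shuffles u (b :: v) s hs).cons a
    · exact ((perm_of_mem_shuffles (a :: u) v s hs).cons b).trans List.perm_middle.symm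
  termination_by u v => u.length + v.length

theorem pairwise_of_mem_shuffles {α : Type*} {p : α → α → Prop} : ∀ (u v w : List α),
    w ∈ shuffles u v → u.Pairwise p → v.Pairwise p →
    (∀ a ∈ u, ∀ b ∈ v, p a b ∧ p b a) → w.Pairwise p
  | [], v, w => by
    intro hw hu hv _; simp [shuffles] at hw; subst hw; exact hv
  | a :: u, [], w => by
    intro hw hu hv _; simp [shuffles] at hw; subst hw; exact hu
  | a :: u, b :: v, w => by
    rw [shuffles]
    simp only [List.mem_append, List.mem_map]
    rintro (⟨s, hs, rfl⟩ | ⟨s, hs, rfl⟩) hu hv hc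
    · have hperm := perm_of_mem_shuffles _ _ _ hs
      refine List.Pairwise.cons (fun x hx => ?_)
        (pairwise_of_mem_shuffles _ _ _ hs hu.of_cons hv
          (fun x hx y hy => hc x (List.mem_cons_of_mem a hx) y hy))
      rcases List.mem_append.mp (hperm.mem_iff.mp hx) with h | h
      · exact List.rel_of_pairwise_cons hu h
      · exact (hc a List.mem_cons_self x h).1
    · have hperm := perm_of_mem_shuffles _ _ _ hs
      refine List.Pairwise.cons (fun x hx => ?_)
        (pairwise_of_mem_shuffles _ _ _ hs hu hv.of_cons
          (fun x hx y hy => hc x hx y (List.mem_cons_of_mem b hy)))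
      rcases List.mem_append.mp (hperm.mem_iff.mp hx) with h | h
      · exact (hc x h b List.mem_cons_self).2
      · exact List.rel_of_pairwise_cons hv h
  termination_by u v => u.length + v.length

theorem nodup_shuffles {X Y : Type*} : ∀ (u : List X) (v : List Y),
    (shuffles (u.map Sum.inl) (v.map Sum.inr)).Nodup
  | [], v => by simp [shuffles]
  | x :: u, [] => by simp [shuffles]
  | x :: u, y :: v => by
    have h1 := nodup_shuffles u (y :: v)
    have h2 := nodup_shuffles (x :: u) v
    simp only [List.map_cons] at h1 h2 ⊢
    rw [shuffles]
    refine List.Nodup.append (h1.map (List.cons_injective)) (h2.map (List.cons_injective)) ?_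
    intro w hw hw'
    simp only [List.mem_map] at hw hw'
    obtain ⟨s, _, rfl⟩ := hw
    obtain ⟨s', _, h⟩ := hw'
    exact Sum.inl_ne_inr (List.head_eq_of_cons_eq h).symm
  termination_by u v => u.length + v.length

theorem mem_shuffles_iff {X Y : Type*} (w : List (X ⊕ Y)) : ∀ (u : List X) (v : List Y),
    w ∈ shuffles (u.map Sum.inl) (v.map Sum.inr) ↔
      w.filterMap Sum.getLeft? = u ∧ w.filterMap Sum.getRight? = v := by
  induction w with
  | nil => intro u v; cases u <;> cases v <;> simp [shuffles]
  | cons c t ih =>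
    intro u v
    cases c with
    | inl x =>
      cases u with
      | nil => cases v <;> simp [shuffles]
      | cons x' u' =>
        cases v with
        | nil =>
          have h := ih u' []
          simp [shuffles_nil_right] at h ⊢
          rw [h]
          tauto
        | cons y v' =>
          have h := ih u' (y :: v')
          simp only [List.map_cons] at h ⊢
          rw [shuffles]
          simp [h]
          tauto
    | inr y =>
      cases u with
      | nil =>
        cases v with
        | nil => simp [shuffles]
        | cons y' v' =>
          have h := ih [] v'
          simp [shuffles] at h ⊢
          rw [h]
          tauto
      | cons x' u' =>
        cases v with
        | nil => simp [shuffles]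
        | cons y' v' =>
          have h := ih (x' :: u') v'
          simp only [List.map_cons] at h ⊢
          rw [shuffles]
          simp [h]
          tauto

/-! ### Bilinearity of `shMul` -/

theorem shMul_add_left (f₁ f₂ g : List ℚ →₀ ℚ) :
    shMul (f₁ + f₂) g = shMul f₁ g + shMul f₂ g := by
  unfold shMul
  rw [Finsupp.sum_add_index']
  · intro u; simp
  · intro u c₁ c₂
    rw [← Finsupp.sum_add]
    congr 1
    ext v cv
    rw [add_smul]

theorem shMul_add_right (f g₁ g₂ : List ℚ →₀ ℚ) :
    shMul f (g₁ + g₂) = shMul f g₁ + shMul f g₂ := by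
  unfold shMul
  rw [← Finsupp.sum_add]
  congr 1
  ext u cu
  rw [Finsupp.sum_add_index']
  · intro v; simp
  · intro v c₁ c₂
    rw [add_smul, smul_add]

noncomputable def shMulLeftHom (g : List ℚ →₀ ℚ) : (List ℚ →₀ ℚ) →+ (List ℚ →₀ ℚ) :=
  AddMonoidHom.mk' (shMul · g) (fun f₁ f₂ => shMul_add_left f₁ f₂ g)

noncomputable def shMulRightHom (f : List ℚ →₀ ℚ) : (List ℚ →₀ ℚ) →+ (List ℚ →₀ ℚ) :=
  AddMonoidHom.mk' (shMul f ·) (fun g₁ g₂ => shMul_add_right f g₁ g₂)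

theorem shMul_single_single (u v : List ℚ) :
    shMul (Finsupp.single u 1) (Finsupp.single v 1) =
      ((shuffles u v).map fun w => Finsupp.single w (1 : ℚ)).sum := by
  unfold shMul
  rw [Finsupp.sum_single_index, Finsupp.sum_single_index] <;> simp

theorem shMul_sum_sum {ι κ : Type*} (s : Finset ι) (t : Finset κ)
    (F : ι → List ℚ →₀ ℚ) (G : κ → List ℚ →₀ ℚ) :
    shMul (∑ i ∈ s, F i) (∑ j ∈ t, G j) = ∑ i ∈ s, ∑ j ∈ t, shMul (F i) (G j) := by
  rw [show shMul (∑ i ∈ s, F i) (∑ j ∈ t, G j)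
      = shMulLeftHom (∑ j ∈ t, G j) (∑ i ∈ s, F i) from rfl, map_sum]
  refine Finset.sum_congr rfl fun i _ => ?_
  exact map_sum (shMulRightHom (F i)) G t

/-! ### `wordSum` as a sum over linear extension lists -/

def linExtLists {Z : Type*} (r : Z → Z → Prop) : Set (List Z) :=
  {l | (∀ z, z ∈ l) ∧ l.Nodup ∧ l.Pairwise fun a b => ¬ r b a}

theorem linExtLists_eq_image {Z : Type*} [Fintype Z] (r : Z → Z → Prop) :
    linExtLists r =
      (fun e : Fin (Fintype.card Z) ≃ Z => List.ofFn ⇑e) '' {e | IsLinExtEnum r e} := by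
  classical
  ext l
  constructor
  · rintro ⟨hcomp, hnd, hpw⟩
    have hsub : l.toFinset = Finset.univ :=
      Finset.eq_univ_iff_forall.mpr fun z => List.mem_toFinset.mpr (hcomp z)
    have hlen : l.length = Fintype.card Z := by
      rw [← List.toFinset_card_of_nodup hnd, hsub, Finset.card_univ]
    set f : Fin (Fintype.card Z) → Z := fun i => l.get (Fin.cast hlen.symm i) with hf
    have hinj : Function.Injective f :=
      (List.nodup_iff_injective_get.mp hnd).comp (Fin.cast_injective _)
    have hbij : Function.Bijective f :=
      (Fintype.bijective_iff_injective_and_card f).mpr ⟨hinj, by simp⟩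
    refine ⟨Equiv.ofBijective f hbij, ?_, ?_⟩
    · intro i j hr
      by_contra hij
      have hlt : j < i := lt_of_not_ge hij
      have hpw' := List.pairwise_ofFn.mp
        (show (List.ofFn f).Pairwise fun a b => ¬ r b a by
          have : List.ofFn f = l := by
            apply List.ext_get (by simp [hlen])
            intro n h1 h2
            simp [hf, List.get_ofFn]
          rw [this]; exact hpw)
      exact hpw' hlt hr
    · show List.ofFn f = l
      apply List.ext_get (by simp [hlen])
      intro n h1 h2
      simp [hf, List.get_ofFn]
  · rintro ⟨e, he, rfl⟩
    refine ⟨fun z => ?_, List.nodup_ofFn.mpr e.injective, ?_⟩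
    · rw [List.mem_ofFn]
      exact ⟨e.symm z, e.apply_symm_apply z⟩
    · refine List.pairwise_ofFn.mpr fun i j hij hr => ?_
      exact absurd (he j i hr) (not_le.mpr hij)

theorem linExtLists_finite {Z : Type*} [Fintype Z] (r : Z → Z → Prop) :
    (linExtLists r).Finite := by
  rw [linExtLists_eq_image]
  exact Set.Finite.image _ (Set.toFinite _)

theorem wordSum_eq_sum_lists {Z : Type*} [Fintype Z] (r : Z → Z → Prop) (δ : Z → ℚ) :
    wordSum r δ = ∑ l ∈ (linExtLists_finite r).toFinset,
      Finsupp.single (l.map δ) (1 : ℚ) := by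
  have hinj0 : Function.Injective (fun e : Fin (Fintype.card Z) ≃ Z => List.ofFn ⇑e) :=
    fun e₁ e₂ h => Equiv.coe_fn_injective (List.ofFn_injective h)
  have hinj : Set.InjOn (fun e : Fin (Fintype.card Z) ≃ Z => List.ofFn ⇑e)
      {e | IsLinExtEnum r e} := hinj0.injOn
  have h1 : wordSum r δ =
      ∑ᶠ l ∈ (fun e : Fin (Fintype.card Z) ≃ Z => List.ofFn ⇑e) '' {e | IsLinExtEnum r e},
        Finsupp.single (l.map δ) (1 : ℚ) := by
    rw [finsum_mem_image hinj]
    unfold wordSum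
    apply finsum_mem_congr rfl
    intro e _
    congr 1
    simp [List.map_ofFn, Function.comp_def]
  rw [h1, ← linExtLists_eq_image, ← finsum_mem_coe_finset]
  congr 1
  simp

/-! ### Main theorem -/

theorem stmt18 {X Y : Type*} [Fintype X] [Fintype Y]
    (rX : X → X → Prop) (rY : Y → Y → Prop)
    (hX : IsPartialOrder X rX) (hY : IsPartialOrder Y rY)
    (δX : X → ℚ) (δY : Y → ℚ) :
    wordSum (Sum.LiftRel rX rY) (Sum.elim δX δY) =
      shMul (wordSum rX δX) (wordSum rY δY) := by
  classical
  rw [wordSum_eq_sum_lists, wordSum_eq_sum_lists, wordSum_eq_sum_lists, shMul_sum_sum]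
  set TZ := (linExtLists_finite (Sum.LiftRel rX rY)).toFinset with hTZ
  set TX := (linExtLists_finite rX).toFinset with hTX
  set TY := (linExtLists_finite rY).toFinset with hTY
  -- rewrite the RHS summand as a list sum over shuffles of `inl/inr` lists
  have hRHS : ∀ lX ∈ TX, ∀ lY ∈ TY,
      shMul (Finsupp.single (lX.map δX) 1) (Finsupp.single (lY.map δY) 1) =
        ((shuffles (lX.map Sum.inl) (lY.map Sum.inr)).map
          (fun w => Finsupp.single (w.map (Sum.elim δX δY)) (1 : ℚ))).sum := by
    intro lX _ lY _
    rw [shMul_single_single]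
    have : shuffles (lX.map δX) (lY.map δY) =
        (shuffles (lX.map Sum.inl) (lY.map Sum.inr)).map (List.map (Sum.elim δX δY)) := by
      rw [shuffles_map]
      simp [List.map_map, Function.comp_def]
    rw [this, List.map_map]
    rfl
  rw [Finset.sum_congr rfl (fun lX hlX => Finset.sum_congr rfl (fun lY hlY => hRHS lX hlX lY hlY))]
  -- fiberwise decomposition of the LHS
  set π : List (X ⊕ Y) → List X × List Y :=
    fun l => (l.filterMap Sum.getLeft?, l.filterMap Sum.getRight?) with hπ
  have hmaps : ∀ l ∈ TZ, π l ∈ TX ×ˢ TY := by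
    intro l hl
    rw [hTZ, Set.Finite.mem_toFinset] at hl
    obtain ⟨hcomp, hnd, hpw⟩ := hl
    rw [Finset.mem_product, hTX, hTY, Set.Finite.mem_toFinset, Set.Finite.mem_toFinset]
    constructor
    · refine ⟨fun x => List.mem_filterMap.mpr ⟨Sum.inl x, hcomp _, rfl⟩,
        hnd.filterMap ?_, hpw.filterMap Sum.getLeft? ?_⟩
      · rintro (x|y) (x'|y') b hb hb' <;> simp_all
      · rintro (x|y) (x'|y') hr b hb b' hb' <;> simp_all
    · refine ⟨fun y => List.mem_filterMap.mpr ⟨Sum.inr y, hcomp _, rfl⟩,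
        hnd.filterMap ?_, hpw.filterMap Sum.getRight? ?_⟩
      · rintro (x|y) (x'|y') b hb hb' <;> simp_all
      · rintro (x|y) (x'|y') hr b hb b' hb' <;> simp_all
  rw [← Finset.sum_fiberwise_of_maps_to hmaps, Finset.sum_product]
  refine Finset.sum_congr rfl fun lX hlX => Finset.sum_congr rfl fun lY hlY => ?_
  -- the fiber over (lX, lY) is exactly the set of shuffles
  have hfiber : TZ.filter (fun l => π l = (lX, lY)) =
      (shuffles (lX.map Sum.inl) (lY.map Sum.inr)).toFinset := by
    rw [hTX, Set.Finite.mem_toFinset] at hlX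
    rw [hTY, Set.Finite.mem_toFinset] at hlY
    obtain ⟨hcompX, hndX, hpwX⟩ := hlX
    obtain ⟨hcompY, hndY, hpwY⟩ := hlY
    ext l
    rw [Finset.mem_filter, List.mem_toFinset, mem_shuffles_iff, hTZ,
      Set.Finite.mem_toFinset, hπ, Prod.mk.injEq]
    constructor
    · rintro ⟨_, h1, h2⟩; exact ⟨h1, h2⟩
    · rintro ⟨h1, h2⟩
      have hmem : l ∈ shuffles (lX.map Sum.inl) (lY.map Sum.inr) :=
        (mem_shuffles_iff l lX lY).mpr ⟨h1, h2⟩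
      have hperm := perm_of_mem_shuffles _ _ _ hmem
      refine ⟨⟨fun z => ?_, ?_, ?_⟩, h1, h2⟩
      · rw [hperm.mem_iff, List.mem_append]
        cases z with
        | inl x => exact Or.inl (List.mem_map.mpr ⟨x, hcompX x, rfl⟩)
        | inr y => exact Or.inr (List.mem_map.mpr ⟨y, hcompY y, rfl⟩)
      · rw [hperm.nodup_iff]
        refine List.Nodup.append (hndX.map Sum.inl_injective) (hndY.map Sum.inr_injective) ?_
        intro a ha ha'
        simp only [List.mem_map] at ha ha'
        obtain ⟨x, _, rfl⟩ := ha
        obtain ⟨y, _, h⟩ := ha'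
        exact Sum.inl_ne_inr h.symm
      · refine pairwise_of_mem_shuffles _ _ _ hmem ?_ ?_ ?_
        · rw [List.pairwise_map]
          refine hpwX.imp fun h hlift => ?_
          cases hlift
          simp_all
        · rw [List.pairwise_map]
          refine hpwY.imp fun h hlift => ?_
          cases hlift
          simp_all
        · rintro a ha b hb
          simp only [List.mem_map] at ha hb
          obtain ⟨x, _, rfl⟩ := ha
          obtain ⟨y, _, rfl⟩ := hb
          exact ⟨(fun h => by cases h), (fun h => by cases h)⟩
  rw [hfiber, List.sum_toFinset _ (nodup_shuffles lX lY)]
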